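/- For the Motzkin simplex Δ₁ = {(0,0), (2,4), (4,2)}, the maximal Δ₁-mediated set equals {(0,0), (1,2), (2,1), (2,4), (3,3), (4,2)}, which equals Δ₁ ∪ Mid(Δ₁); i.e., Δ₁ is an M-simplex. -/

import Mathlib

open Set

/-- Cast an integer lattice point to a real point. -/
def toR {n : ℕ} (p : Fin n → ℤ) : Fin n → ℝ := fun i => (p i : ℝ)

/-- A lattice point all of whose coordinates are even, i.e., a point of `(2ℤ)^n`. -/
def Even2 {n : ℕ} (p : Fin n → ℤ) : Prop := ∀ i, 2 ∣ p i

/-- The set of midpoints of pairs of distinct even points of `L`. -/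
def Mid2 {n : ℕ} (L : Set (Fin n → ℤ)) : Set (Fin n → ℤ) :=
  {m | ∃ s ∈ L, ∃ t ∈ L, Even2 s ∧ Even2 t ∧ s ≠ t ∧ s + t = 2 • m}

/-- `L ⊆ ℤ^n` is `Δ`-mediated if it contains `Δ` and every element of `L`
is a midpoint of two distinct even points of `L` or belongs to `Δ`. -/
def IsMediated {n : ℕ} (Δ L : Set (Fin n → ℤ)) : Prop :=
  L.Finite ∧ Δ ⊆ L ∧ L ⊆ Mid2 L ∪ Δ

/-- The lattice points of the convex hull `conv(Δ) ∩ ℤ^n`. -/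
def convZ {n : ℕ} (Δ : Set (Fin n → ℤ)) : Set (Fin n → ℤ) :=
  {p | toR p ∈ convexHull ℝ (toR '' Δ)}

lemma vec2_ext (p : Fin 2 → ℤ) (a b : ℤ) (h0 : p 0 = a) (h1 : p 1 = b) : p = ![a,b] := by
  funext i; fin_cases i <;> simp [h0, h1]

lemma smul2_apply (m : Fin 2 → ℤ) (i : Fin 2) : (2 • m) i = 2 * m i := by
  simp [Pi.smul_apply]

lemma ne2 {s t : Fin 2 → ℤ} (h : s ≠ t) : s 0 ≠ t 0 ∨ s 1 ≠ t 1 := by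
  by_contra hc
  push_neg at hc
  exact h (by funext i; fin_cases i <;> simp [hc.1, hc.2])

lemma level_bound {Δ M : Set (Fin 2 → ℤ)} (hfin : M.Finite)
    (hsub : M ⊆ Mid2 M ∪ Δ) (ℓ : (Fin 2 → ℤ) → ℤ)
    (hadd : ∀ s t p : Fin 2 → ℤ, s + t = 2 • p → ℓ s + ℓ t = 2 * ℓ p)
    (hΔ : ∀ p ∈ Δ, 0 ≤ ℓ p) : ∀ p ∈ M, 0 ≤ ℓ p := by
  by_contra hcon
  push_neg at hcon
  obtain ⟨p0, hp0M, hp0⟩ := hcon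
  obtain ⟨m, hmF, hmin⟩ := hfin.toFinset.exists_min_image ℓ ⟨p0, hfin.mem_toFinset.2 hp0M⟩
  have hmneg : ℓ m < 0 := lt_of_le_of_lt (hmin p0 (hfin.mem_toFinset.2 hp0M)) hp0
  obtain ⟨q, hqG, hmaxq⟩ := (hfin.toFinset.filter (fun p => ℓ p = ℓ m)).exists_max_image
      (fun p => p 0 ^ 2 + p 1 ^ 2) ⟨m, by simp [hmF]⟩
  simp only [Finset.mem_filter] at hqG
  have hqM : q ∈ M := hfin.mem_toFinset.1 hqG.1
  have hqmid : q ∈ Mid2 M := by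
    rcases hsub hqM with h | h
    · exact h
    · have := hΔ q h
      have := hqG.2
      omega
  obtain ⟨s, hsM, t, htM, _, _, hst, heq⟩ := hqmid
  have hadd' := hadd s t q heq
  have hs : ℓ s = ℓ m := by
    have := hmin s (hfin.mem_toFinset.2 hsM)
    have := hmin t (hfin.mem_toFinset.2 htM)
    omega
  have ht : ℓ t = ℓ m := by
    have := hmin s (hfin.mem_toFinset.2 hsM)
    have := hmin t (hfin.mem_toFinset.2 htM)
    omega
  have h2 := hmaxq s (by simp [Finset.mem_filter, hfin.mem_toFinset.2 hsM, hs])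
  have h3 := hmaxq t (by simp [Finset.mem_filter, hfin.mem_toFinset.2 htM, ht])
  have e0 : s 0 + t 0 = 2 * q 0 := by have := congrFun heq 0; simpa [smul2_apply] using this
  have e1 : s 1 + t 1 = 2 * q 1 := by have := congrFun heq 1; simpa [smul2_apply] using this
  have k0 : 2*(s 0^2 + t 0^2) = 4*q 0^2 + (s 0 - t 0)^2 := by
    linear_combination (s 0 + t 0 + 2*q 0) * e0
  have k1 : 2*(s 1^2 + t 1^2) = 4*q 1^2 + (s 1 - t 1)^2 := by
    linear_combination (s 1 + t 1 + 2*q 1) * e1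
  rcases ne2 hst with h | h
  · have hd : (s 0 - t 0) ^ 2 ≥ 1 := by
      have h' : s 0 - t 0 ≠ 0 := by omega
      rcases h'.lt_or_gt with h'' | h'' <;> nlinarith
    nlinarith [sq_nonneg (s 1 - t 1)]
  · have hd : (s 1 - t 1) ^ 2 ≥ 1 := by
      have h' : s 1 - t 1 ≠ 0 := by omega
      rcases h'.lt_or_gt with h'' | h'' <;> nlinarith
    nlinarith [sq_nonneg (s 0 - t 0)]

section helpers

def Dlt : Set (Fin 2 → ℤ) := {![0,0], ![2,4], ![4,2]}
def Sx : Set (Fin 2 → ℤ) := {![0,0], ![1,2], ![2,1], ![2,4], ![3,3], ![4,2]}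

lemma memD_coords : ∀ p ∈ Dlt, (p 0 = 0 ∧ p 1 = 0) ∨ (p 0 = 2 ∧ p 1 = 4) ∨ (p 0 = 4 ∧ p 1 = 2) := by
  intro p hp
  rcases hp with h | h | h <;> subst h <;> norm_num

lemma mid2_mono {A B : Set (Fin 2 → ℤ)} (h : A ⊆ B) : Mid2 A ⊆ Mid2 B := by
  rintro m ⟨s, hs, t, ht, e1, e2, e3, e4⟩
  exact ⟨s, h hs, t, h ht, e1, e2, e3, e4⟩

lemma mid_12 : ![1,2] ∈ Mid2 Dlt := by
  refine ⟨![0,0], by left; rfl, ![2,4], by right; left; rfl, ?_, ?_, ?_, ?_⟩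
  · intro i; fin_cases i <;> norm_num
  · intro i; fin_cases i <;> norm_num
  · intro h; have := congrFun h 0; norm_num at this
  · funext i; fin_cases i <;> norm_num [smul2_apply]

lemma mid_21 : ![2,1] ∈ Mid2 Dlt := by
  refine ⟨![0,0], by left; rfl, ![4,2], by right; right; rfl, ?_, ?_, ?_, ?_⟩
  · intro i; fin_cases i <;> norm_num
  · intro i; fin_cases i <;> norm_num
  · intro h; have := congrFun h 0; norm_num at this
  · funext i; fin_cases i <;> norm_num [smul2_apply]

lemma mid_33 : ![3,3] ∈ Mid2 Dlt := by
  refine ⟨![2,4], by right; left; rfl, ![4,2], by right; right; rfl, ?_, ?_, ?_, ?_⟩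
  · intro i; fin_cases i <;> norm_num
  · intro i; fin_cases i <;> norm_num
  · intro h; have := congrFun h 0; norm_num at this
  · funext i; fin_cases i <;> norm_num [smul2_apply]

lemma sx_mediated : IsMediated Dlt Sx := by
  refine ⟨?_, ?_, ?_⟩
  · exact (((((Set.finite_singleton _).insert _).insert _).insert _).insert _).insert _
  · intro p hp
    rcases hp with h | h | h
    · exact Or.inl h
    · exact Or.inr (Or.inr (Or.inr (Or.inl h)))
    · exact Or.inr (Or.inr (Or.inr (Or.inr (Or.inr h))))
  · have hDS : Dlt ⊆ Sx := by
      intro p hp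
      rcases hp with h | h | h
      · exact Or.inl h
      · exact Or.inr (Or.inr (Or.inr (Or.inl h)))
      · exact Or.inr (Or.inr (Or.inr (Or.inr (Or.inr h))))
    intro p hp
    rcases hp with h | h | h | h | h | h
    · exact Or.inr (Or.inl h)
    · exact Or.inl (mid2_mono hDS (h ▸ mid_12))
    · exact Or.inl (mid2_mono hDS (h ▸ mid_21))
    · exact Or.inr (Or.inr (Or.inl h))
    · exact Or.inl (mid2_mono hDS (h ▸ mid_33))
    · exact Or.inr (Or.inr (Or.inr h))

end helpers

/-- The Motzkin simplex `Δ₁ = {(0,0),(2,4),(4,2)}` is an M-simplex: its maximal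
mediated set is `{(0,0),(1,2),(2,1),(2,4),(3,3),(4,2)} = Δ₁ ∪ Mid(Δ₁)`. -/
theorem motzkin_M_simplex (M : Set (Fin 2 → ℤ))
    (hmed : IsMediated ({![0,0], ![2,4], ![4,2]} : Set (Fin 2 → ℤ)) M)
    (hmax : ∀ L, IsMediated ({![0,0], ![2,4], ![4,2]} : Set (Fin 2 → ℤ)) L → L ⊆ M) :
    M = ({![0,0], ![1,2], ![2,1], ![2,4], ![3,3], ![4,2]} : Set (Fin 2 → ℤ)) ∧
    M = ({![0,0], ![2,4], ![4,2]} : Set (Fin 2 → ℤ)) ∪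
          Mid2 ({![0,0], ![2,4], ![4,2]} : Set (Fin 2 → ℤ)) := by
  obtain ⟨hfin, hDsub, hMsub⟩ := hmed
  have hDeq : ({![0,0], ![2,4], ![4,2]} : Set (Fin 2 → ℤ)) = Dlt := rfl
  have hSeq : ({![0,0], ![1,2], ![2,1], ![2,4], ![3,3], ![4,2]} : Set (Fin 2 → ℤ)) = Sx := rfl
  rw [hDeq] at hDsub hMsub hmax ⊢
  rw [hSeq]
  -- the three linear bounds
  have hb1 : ∀ p ∈ M, 0 ≤ 2 * p 0 - p 1 := by
    apply level_bound hfin hMsub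
    · intro s t p h
      have e0 : s 0 + t 0 = 2 * p 0 := by have := congrFun h 0; simpa [smul2_apply] using this
      have e1 : s 1 + t 1 = 2 * p 1 := by have := congrFun h 1; simpa [smul2_apply] using this
      omega
    · intro p hp
      rcases memD_coords p hp with ⟨a,b⟩ | ⟨a,b⟩ | ⟨a,b⟩ <;> omega
  have hb2 : ∀ p ∈ M, 0 ≤ 2 * p 1 - p 0 := by
    apply level_bound hfin hMsub
    · intro s t p h
      have e0 : s 0 + t 0 = 2 * p 0 := by have := congrFun h 0; simpa [smul2_apply] using this
      have e1 : s 1 + t 1 = 2 * p 1 := by have := congrFun h 1; simpa [smul2_apply] using this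
      omega
    · intro p hp
      rcases memD_coords p hp with ⟨a,b⟩ | ⟨a,b⟩ | ⟨a,b⟩ <;> omega
  have hb3 : ∀ p ∈ M, 0 ≤ 6 - p 0 - p 1 := by
    apply level_bound hfin hMsub
    · intro s t p h
      have e0 : s 0 + t 0 = 2 * p 0 := by have := congrFun h 0; simpa [smul2_apply] using this
      have e1 : s 1 + t 1 = 2 * p 1 := by have := congrFun h 1; simpa [smul2_apply] using this
      omega
    · intro p hp
      rcases memD_coords p hp with ⟨a,b⟩ | ⟨a,b⟩ | ⟨a,b⟩ <;> omega
  -- exclusion of (2,2)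
  have h22 : ![2,2] ∉ M := by
    intro hmem
    rcases hMsub hmem with hmid | hD
    · obtain ⟨s, hsM, t, htM, hes, het, hst, heq⟩ := hmid
      have e0 : s 0 + t 0 = 4 := by have := congrFun heq 0; simpa [smul2_apply] using this
      have e1 : s 1 + t 1 = 4 := by have := congrFun heq 1; simpa [smul2_apply] using this
      have := hb1 s hsM; have := hb2 s hsM; have := hb3 s hsM
      have := hb1 t htM; have := hb2 t htM; have := hb3 t htM
      have := hes 0; have := hes 1; have := het 0; have := het 1
      rcases ne2 hst with h | h <;> omega
    · rcases memD_coords _ hD with ⟨a,b⟩ | ⟨a,b⟩ | ⟨a,b⟩ <;> revert a b <;> norm_num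
  -- a helper: points of M are not (2,2)
  have hnot22 : ∀ p ∈ M, ¬(p 0 = 2 ∧ p 1 = 2) := by
    rintro p hp ⟨a, b⟩
    exact h22 (vec2_ext p 2 2 a b ▸ hp)
  -- exclusion of (1,1), (2,3), (3,2)
  have hexc : ∀ p ∈ M, ¬(p 0 = 1 ∧ p 1 = 1) ∧ ¬(p 0 = 2 ∧ p 1 = 3) ∧ ¬(p 0 = 3 ∧ p 1 = 2) := by
    intro p hp
    refine ⟨?_, ?_, ?_⟩ <;> rintro ⟨a, b⟩ <;>
    · rcases hMsub hp with hmid | hD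
      · obtain ⟨s, hsM, t, htM, hes, het, hst, heq⟩ := hmid
        have e0 : s 0 + t 0 = 2 * p 0 := by have := congrFun heq 0; simpa [smul2_apply] using this
        have e1 : s 1 + t 1 = 2 * p 1 := by have := congrFun heq 1; simpa [smul2_apply] using this
        have := hb1 s hsM; have := hb2 s hsM; have := hb3 s hsM
        have := hb1 t htM; have := hb2 t htM; have := hb3 t htM
        have := hes 0; have := hes 1; have := het 0; have := het 1
        have := hnot22 s hsM; have := hnot22 t htM
        rcases ne2 hst with h | h <;> omega
      · rcases memD_coords _ hD with ⟨a',b'⟩ | ⟨a',b'⟩ | ⟨a',b'⟩ <;> omega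
  -- M ⊆ Sx
  have hMS : M ⊆ Sx := by
    intro p hp
    have b1 := hb1 p hp; have b2 := hb2 p hp; have b3 := hb3 p hp
    have n22 := hnot22 p hp
    obtain ⟨n11, n23, n32⟩ := hexc p hp
    have : (p 0 = 0 ∧ p 1 = 0) ∨ (p 0 = 1 ∧ p 1 = 2) ∨ (p 0 = 2 ∧ p 1 = 1) ∨
        (p 0 = 2 ∧ p 1 = 4) ∨ (p 0 = 3 ∧ p 1 = 3) ∨ (p 0 = 4 ∧ p 1 = 2) := by omega
    rcases this with ⟨a,b⟩|⟨a,b⟩|⟨a,b⟩|⟨a,b⟩|⟨a,b⟩|⟨a,b⟩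
    · exact Or.inl (vec2_ext p _ _ a b)
    · exact Or.inr (Or.inl (vec2_ext p _ _ a b))
    · exact Or.inr (Or.inr (Or.inl (vec2_ext p _ _ a b)))
    · exact Or.inr (Or.inr (Or.inr (Or.inl (vec2_ext p _ _ a b))))
    · exact Or.inr (Or.inr (Or.inr (Or.inr (Or.inl (vec2_ext p _ _ a b)))))
    · exact Or.inr (Or.inr (Or.inr (Or.inr (Or.inr (vec2_ext p _ _ a b)))))
  have hSM : Sx ⊆ M := hmax Sx sx_mediated
  have hMeq : M = Sx := Set.Subset.antisymm hMS hSM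
  refine ⟨hMeq, ?_⟩
  rw [hMeq]
  apply Set.Subset.antisymm
  · intro p hp
    rcases hp with h | h | h | h | h | h
    · exact Or.inl (Or.inl h)
    · exact Or.inr (h ▸ mid_12)
    · exact Or.inr (h ▸ mid_21)
    · exact Or.inl (Or.inr (Or.inl h))
    · exact Or.inr (h ▸ mid_33)
    · exact Or.inl (Or.inr (Or.inr h))
  · rintro p (hD | ⟨s, hs, t, ht, _, _, hst, heq⟩)
    · rcases memD_coords _ hD with ⟨a,b⟩ | ⟨a,b⟩ | ⟨a,b⟩
      · exact Or.inl (vec2_ext p _ _ a b)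
      · exact Or.inr (Or.inr (Or.inr (Or.inl (vec2_ext p _ _ a b))))
      · exact Or.inr (Or.inr (Or.inr (Or.inr (Or.inr (vec2_ext p _ _ a b)))))
    · have e0 : s 0 + t 0 = 2 * p 0 := by have := congrFun heq 0; simpa [smul2_apply] using this
      have e1 : s 1 + t 1 = 2 * p 1 := by have := congrFun heq 1; simpa [smul2_apply] using this
      have Ds := memD_coords s hs
      have Dt := memD_coords t ht
      have : (p 0 = 1 ∧ p 1 = 2) ∨ (p 0 = 2 ∧ p 1 = 1) ∨ (p 0 = 3 ∧ p 1 = 3) := by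
        rcases ne2 hst with h | h <;>
        rcases Ds with ⟨a,b⟩|⟨a,b⟩|⟨a,b⟩ <;> rcases Dt with ⟨a',b'⟩|⟨a',b'⟩|⟨a',b'⟩ <;> omega
      rcases this with ⟨a,b⟩|⟨a,b⟩|⟨a,b⟩
      · exact Or.inr (Or.inl (vec2_ext p _ _ a b))
      · exact Or.inr (Or.inr (Or.inl (vec2_ext p _ _ a b)))
      · exact Or.inr (Or.inr (Or.inr (Or.inr (Or.inl (vec2_ext p _ _ a b)))))
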